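/- Every quiddity cycle is one of (0,0), (1,1,1), (1,2,1,2), or contains one of the following 12 sequences: (1,2,2), (1,2,3,1), (1,2,3,2,1), (1,2,4,1,2), (1,2,4,1,3,1), (1,3,1,3), (1,3,1,4,1), (1,3,1,5,1,2), (1,3,1,5,1,3,1), (1,4,1,2), (2,1,3), (2,1,5,1,2). -/
import Mathlib


/-- One generating move of the dihedral action on finite sequences:
cyclic rotation by one, or reversal. -/
def dihStep (c d : List ℕ) : Prop := d = c.rotate 1 ∨ d = c.reverse

/-- The equivalence relation on finite sequences generated by cyclic
rotations and reversal (the dihedral group action). -/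
def DihEquiv : List ℕ → List ℕ → Prop := Relation.EqvGen dihStep

/-- The lists that are representatives of quiddity cycles: the smallest
dihedrally closed collection containing `(0,0)` and closed under the rule
`(c₁,…,cₙ) ↦ (c₁+1, 1, c₂+1, c₃, …, cₙ)`. -/
inductive IsQuiddity : List ℕ → Prop
  | base : IsQuiddity [0, 0]
  | dih {c d : List ℕ} : IsQuiddity c → dihStep c d → IsQuiddity d
  | grow {a b : ℕ} {t : List ℕ} : IsQuiddity (a :: b :: t) →
      IsQuiddity ((a + 1) :: 1 :: (b + 1) :: t)

/-- The (class of the) cycle `c` contains the finite sequence `d`: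
some representative of `c` has `d` as a block of consecutive entries. -/
def CycContains (c d : List ℕ) : Prop := ∃ c', DihEquiv c c' ∧ d <:+: c'

abbrev pats12 : List (List ℕ) :=
  [[1,2,2], [1,2,3,1], [1,2,3,2,1], [1,2,4,1,2], [1,2,4,1,3,1],
   [1,3,1,3], [1,3,1,4,1], [1,3,1,5,1,2], [1,3,1,5,1,3,1],
   [1,4,1,2], [2,1,3], [2,1,5,1,2]]

section Basics
open Relation List

lemma dih_refl (c : List ℕ) : DihEquiv c c := EqvGen.refl c
lemma dih_trans {a b c : List ℕ} (h1 : DihEquiv a b) (h2 : DihEquiv b c) : DihEquiv a c :=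
  EqvGen.trans _ _ _ h1 h2
lemma dih_symm {a b : List ℕ} (h : DihEquiv a b) : DihEquiv b a := EqvGen.symm _ _ h
lemma dih_of_step {a b : List ℕ} (h : dihStep a b) : DihEquiv a b := EqvGen.rel _ _ h
lemma dih_reverse (c : List ℕ) : DihEquiv c c.reverse := dih_of_step (Or.inr rfl)

lemma dih_rotate (c : List ℕ) (k : ℕ) : DihEquiv c (c.rotate k) := by
  induction k with
  | zero => simpa using dih_refl c
  | succ n ih =>
      have : DihEquiv (c.rotate n) ((c.rotate n).rotate 1) := dih_of_step (Or.inl rfl)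
      rw [rotate_rotate] at this
      exact dih_trans ih this

lemma dih_perm {c d : List ℕ} (h : DihEquiv c d) : c.Perm d := by
  induction h with
  | rel x y h => rcases h with h | h <;> subst h
                 · exact (rotate_perm _ _).symm
                 · exact (reverse_perm _).symm
  | refl x => exact List.Perm.refl x
  | symm x y _ ih => exact ih.symm
  | trans x y z _ _ ih1 ih2 => exact ih1.trans ih2

lemma dih_length {c d : List ℕ} (h : DihEquiv c d) : c.length = d.length :=
  (dih_perm h).length_eq

lemma rotate_rotate_self (l : List ℕ) (k : ℕ) : ∃ m, (l.rotate k).rotate m = l := by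
  rcases eq_or_ne l [] with rfl | hne
  · exact ⟨0, by simp⟩
  · have hpos : 0 < l.length := List.length_pos_iff.2 hne
    refine ⟨l.length - k % l.length, ?_⟩
    rw [rotate_rotate]
    have hmod := Nat.mod_lt k hpos
    have hdm := Nat.div_add_mod k l.length
    have he : l.length * (k / l.length + 1) = l.length * (k / l.length) + l.length := by ring
    have : k + (l.length - k % l.length) = l.length * (k / l.length + 1) := by omega
    rw [this, rotate_length_mul]

lemma dih_canon {c d : List ℕ} (h : DihEquiv c d) :
    ∃ k, d = c.rotate k ∨ d = c.reverse.rotate k := by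
  induction h with
  | rel x y h =>
      rcases h with h | h
      · exact ⟨1, Or.inl h⟩
      · exact ⟨0, Or.inr (by simpa using h)⟩
  | refl x => exact ⟨0, Or.inl (by simp)⟩
  | symm x y _ ih =>
      obtain ⟨k, hk | hk⟩ := ih
      · obtain ⟨m, hm⟩ := rotate_rotate_self x k
        exact ⟨m, Or.inl (by rw [hk]; exact hm.symm)⟩
      · have : y.reverse = (x.reverse.rotate k).reverse := by rw [hk]
        rw [reverse_rotate, List.reverse_reverse] at this
        obtain ⟨m, hm⟩ := rotate_rotate_self x (x.reverse.length - k % x.reverse.length)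
        refine ⟨m, Or.inr ?_⟩
        rw [this]
        exact hm.symm
  | trans x y z _ _ ih1 ih2 =>
      obtain ⟨k1, hk1 | hk1⟩ := ih1 <;> obtain ⟨k2, hk2 | hk2⟩ := ih2
      · exact ⟨k1 + k2, Or.inl (by rw [hk2, hk1, rotate_rotate])⟩
      · refine ⟨x.length - k1 % x.length + k2, Or.inr ?_⟩
        rw [hk2, hk1, ← rotate_rotate, reverse_rotate]
      · exact ⟨k1 + k2, Or.inr (by rw [hk2, hk1, rotate_rotate])⟩
      · refine ⟨x.reverse.length - k1 % x.reverse.length + k2, Or.inl ?_⟩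
        rw [hk2, hk1, ← rotate_rotate, reverse_rotate, List.reverse_reverse]

lemma quid_rotate {c : List ℕ} (h : IsQuiddity c) (k : ℕ) : IsQuiddity (c.rotate k) := by
  induction k with
  | zero => simpa using h
  | succ n ih => exact (rotate_rotate c n 1) ▸ IsQuiddity.dih ih (Or.inl rfl)

lemma quid_dih {c d : List ℕ} (h : IsQuiddity c) (he : DihEquiv c d) : IsQuiddity d := by
  obtain ⟨k, hk | hk⟩ := dih_canon he
  · exact hk ▸ quid_rotate h k
  · exact hk ▸ quid_rotate (IsQuiddity.dih h (Or.inr rfl)) k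

lemma cyc_trans {c d f : List ℕ} (h : DihEquiv c d) (hc : CycContains d f) : CycContains c f := by
  obtain ⟨c', h1, h2⟩ := hc
  exact ⟨c', dih_trans h h1, h2⟩

lemma dih_rotmove (X Y : List ℕ) : DihEquiv (X ++ Y) (Y ++ X) := by
  have := dih_rotate (X ++ Y) X.length
  rwa [rotate_append_length_eq] at this

lemma quid_destruct {c : List ℕ} (h : IsQuiddity c) :
    DihEquiv c [0,0] ∨ ∃ x y r, DihEquiv c ((x+1) :: 1 :: (y+1) :: r) ∧ IsQuiddity (x :: y :: r) := by
  induction h with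
  | base => exact Or.inl (dih_refl _)
  | dih h hs ih =>
      have hd := dih_symm (dih_of_step hs)
      rcases ih with h1 | ⟨x, y, r, h1, h2⟩
      · exact Or.inl (dih_trans hd h1)
      · exact Or.inr ⟨x, y, r, dih_trans hd h1, h2⟩
  | grow h _ => exact Or.inr ⟨_, _, _, dih_refl _, h⟩

lemma quid_len2 {c : List ℕ} (h : IsQuiddity c) (hl : c.length = 2) : DihEquiv c [0,0] := by
  rcases quid_destruct h with h1 | ⟨x, y, r, h1, _⟩
  · exact h1
  · have := dih_length h1
    rw [hl] at this
    simp only [List.length_cons] at this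
    omega

lemma quid_len3 {c : List ℕ} (h : IsQuiddity c) (hl : c.length = 3) : DihEquiv c [1,1,1] := by
  rcases quid_destruct h with h1 | ⟨x, y, r, h1, h2⟩
  · have := dih_length h1; simp [hl] at this
  · have hlen := dih_length h1
    rw [hl] at hlen
    simp only [List.length_cons] at hlen
    have hr : r = [] := List.length_eq_zero_iff.1 (by omega)
    subst hr
    have h00 := quid_len2 h2 (by simp)
    have hperm := dih_perm h00
    have hx : x = 0 := by
      have : x ∈ [x, y] := by simp
      have := hperm.mem_iff.1 this
      simpa using this
    have hy : y = 0 := by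
      have : y ∈ [x, y] := by simp
      have := hperm.mem_iff.1 this
      simpa using this
    subst hx; subst hy
    simpa using h1

end Basics

section InfixMachinery
open List

lemma prefix_append_cases {p A B : List ℕ} (h : p <+: A ++ B) :
    p <+: A ∨ ∃ q, p = A ++ q ∧ q <+: B := by
  obtain ⟨r, hr⟩ := h
  rcases List.append_eq_append_iff.1 hr with ⟨a', hA, hB⟩ | ⟨c', hp, hB⟩
  · exact Or.inl ⟨a', hA.symm⟩
  · exact Or.inr ⟨c', hp, r, hB.symm⟩

lemma infix_append_cases {p A B : List ℕ} (h : p <:+: A ++ B) :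
    p <:+: A ∨ p <:+: B ∨
      ∃ p₁ p₂, p = p₁ ++ p₂ ∧ p₁ ≠ [] ∧ p₂ ≠ [] ∧ p₁ <:+ A ∧ p₂ <+: B := by
  induction A with
  | nil => exact Or.inr (Or.inl (by simpa using h))
  | cons a A ih =>
      rw [List.cons_append, List.infix_cons_iff] at h
      rcases h with h | h
      · rcases p with _ | ⟨x, p'⟩
        · exact Or.inl List.nil_infix
        · obtain ⟨rfl, hp'⟩ := List.cons_prefix_cons.1 h
          rcases prefix_append_cases hp' with h2 | ⟨q, rfl, hq⟩
          · exact Or.inl (List.IsPrefix.isInfix (List.cons_prefix_cons.2 ⟨rfl, h2⟩))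
          · rcases q with _ | ⟨y, q⟩
            · exact Or.inl (by simpa using List.infix_refl (x :: A))
            · exact Or.inr (Or.inr ⟨x :: A, y :: q, by simp, by simp, by simp,
                List.suffix_refl _, hq⟩)
      · rcases ih h with h2 | h2 | ⟨p₁, p₂, h3, h4, h5, h6, h7⟩
        · exact Or.inl (h2.trans (List.infix_cons_iff.2 (Or.inr (List.infix_refl A))))
        · exact Or.inr (Or.inl h2)
        · exact Or.inr (Or.inr ⟨p₁, p₂, h3, h4, h5, h6.trans (List.suffix_cons a A), h7⟩)

lemma cyclic_infix_cases {l p : List ℕ} (k : ℕ) (hlen : p.length ≤ l.length)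
    (h : p <:+: l.rotate k) :
    p <:+: l ∨ ∃ p₁ p₂ m, p₁ ≠ [] ∧ p₂ ≠ [] ∧ p = p₁ ++ p₂ ∧ l = p₂ ++ m ++ p₁ := by
  rcases eq_or_ne l [] with rfl | hne
  · left; simpa using h
  · have hpos : 0 < l.length := List.length_pos_iff.2 hne
    rw [← List.rotate_mod, List.rotate_eq_drop_append_take (Nat.mod_lt k hpos).le] at h
    set k' := k % l.length with hk'
    rcases infix_append_cases h with h1 | h1 | ⟨p₁, p₂, hp12, h1ne, h2ne, hs, hpre⟩
    · exact Or.inl (h1.trans (List.drop_suffix k' l).isInfix)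
    · exact Or.inl (h1.trans (List.take_prefix k' l).isInfix)
    · have hs' : p₁ <:+ l := hs.trans (List.drop_suffix k' l)
      have hpre' : p₂ <+: l := hpre.trans (List.take_prefix k' l)
      obtain ⟨e, he⟩ := hs'
      have hel : e.length = l.length - p₁.length := by
        have := congrArg List.length he
        simp at this
        omega
      have hple : p₁.length + p₂.length ≤ l.length := by
        have := congrArg List.length hp12
        simp at this
        omega
      have hee : e <+: l := ⟨p₁, he⟩
      have h2e : p₂ <+: e := List.prefix_of_prefix_length_le hpre' hee (by omega)
      obtain ⟨m, hm⟩ := h2e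
      refine Or.inr ⟨p₁, p₂, m, h1ne, h2ne, hp12, ?_⟩
      rw [← he, ← hm, List.append_assoc]

-- helpers to produce CycContains
lemma cyc_fwd {N U W T f : List ℕ} (hd : DihEquiv N (U ++ W ++ T)) (hf : f <:+: W) :
    CycContains N f := ⟨U ++ W ++ T, hd, hf.trans ⟨U, T, rfl⟩⟩

lemma cyc_rev {N U W T f : List ℕ} (hd : DihEquiv N (U ++ W ++ T)) (hf : f <:+: W.reverse) :
    CycContains N f :=
  ⟨(U ++ W ++ T).reverse, dih_trans hd (dih_reverse _), hf.trans ⟨T.reverse, U.reverse, by simp⟩⟩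

lemma dih_of_eq {N M : List ℕ} (h : N = M) : DihEquiv N M := h ▸ dih_refl N

lemma dih_rot_helper {N X Y M : List ℕ} (h1 : N = X ++ Y) (h2 : Y ++ X = M) :
    DihEquiv N M := by subst h1; subst h2; exact dih_rotmove X Y

lemma rot_1212 (m : ℕ) :
    ([1,2,1,2] : List ℕ).rotate m = [1,2,1,2] ∨ ([1,2,1,2] : List ℕ).rotate m = [2,1,2,1] := by
  rw [← List.rotate_mod]
  have h4 : ([1,2,1,2] : List ℕ).length = 4 := by decide
  rw [h4]
  have : m % 4 = 0 ∨ m % 4 = 1 ∨ m % 4 = 2 ∨ m % 4 = 3 := by omega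
  rcases this with h | h | h | h <;> rw [h] <;> first | exact Or.inl (by decide) | exact Or.inr (by decide)

end InfixMachinery

section Cases
open List

lemma case_ii (a b : ℕ) (y v : List ℕ) (hp : b :: y ∈ pats12) :
    ∃ f ∈ pats12, CycContains ((a+1) :: 1 :: (b+1) :: (y ++ v)) f := by
  simp only [pats12, List.mem_cons, List.not_mem_nil, or_false] at hp
  rcases hp with h|h|h|h|h|h|h|h|h|h|h|h
  · obtain ⟨rfl, rfl⟩ : b = 1 ∧ y = [2,2] := by simpa using h
    exact ⟨[1,2,2], by decide, cyc_fwd (U := [a+1]) (W := [1,2,2,2]) (T := v) (dih_of_eq (by simp)) (by decide)⟩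
  · obtain ⟨rfl, rfl⟩ : b = 1 ∧ y = [2,3,1] := by simpa using h
    exact ⟨[1,2,2], by decide, cyc_fwd (U := [a+1]) (W := [1,2,2,3,1]) (T := v) (dih_of_eq (by simp)) (by decide)⟩
  · obtain ⟨rfl, rfl⟩ : b = 1 ∧ y = [2,3,2,1] := by simpa using h
    exact ⟨[1,2,2], by decide, cyc_fwd (U := [a+1]) (W := [1,2,2,3,2,1]) (T := v) (dih_of_eq (by simp)) (by decide)⟩
  · obtain ⟨rfl, rfl⟩ : b = 1 ∧ y = [2,4,1,2] := by simpa using h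
    exact ⟨[1,2,2], by decide, cyc_fwd (U := [a+1]) (W := [1,2,2,4,1,2]) (T := v) (dih_of_eq (by simp)) (by decide)⟩
  · obtain ⟨rfl, rfl⟩ : b = 1 ∧ y = [2,4,1,3,1] := by simpa using h
    exact ⟨[1,2,2], by decide, cyc_fwd (U := [a+1]) (W := [1,2,2,4,1,3,1]) (T := v) (dih_of_eq (by simp)) (by decide)⟩
  · obtain ⟨rfl, rfl⟩ : b = 1 ∧ y = [3,1,3] := by simpa using h
    exact ⟨[1,2,3,1], by decide, cyc_fwd (U := [a+1]) (W := [1,2,3,1,3]) (T := v) (dih_of_eq (by simp)) (by decide)⟩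
  · obtain ⟨rfl, rfl⟩ : b = 1 ∧ y = [3,1,4,1] := by simpa using h
    exact ⟨[1,2,3,1], by decide, cyc_fwd (U := [a+1]) (W := [1,2,3,1,4,1]) (T := v) (dih_of_eq (by simp)) (by decide)⟩
  · obtain ⟨rfl, rfl⟩ : b = 1 ∧ y = [3,1,5,1,2] := by simpa using h
    exact ⟨[1,2,3,1], by decide, cyc_fwd (U := [a+1]) (W := [1,2,3,1,5,1,2]) (T := v) (dih_of_eq (by simp)) (by decide)⟩
  · obtain ⟨rfl, rfl⟩ : b = 1 ∧ y = [3,1,5,1,3,1] := by simpa using h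
    exact ⟨[1,2,3,1], by decide, cyc_fwd (U := [a+1]) (W := [1,2,3,1,5,1,3,1]) (T := v) (dih_of_eq (by simp)) (by decide)⟩
  · obtain ⟨rfl, rfl⟩ : b = 1 ∧ y = [4,1,2] := by simpa using h
    exact ⟨[1,2,4,1,2], by decide, cyc_fwd (U := [a+1]) (W := [1,2,4,1,2]) (T := v) (dih_of_eq (by simp)) (by decide)⟩
  · obtain ⟨rfl, rfl⟩ : b = 2 ∧ y = [1,3] := by simpa using h
    exact ⟨[1,3,1,3], by decide, cyc_fwd (U := [a+1]) (W := [1,3,1,3]) (T := v) (dih_of_eq (by simp)) (by decide)⟩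
  · obtain ⟨rfl, rfl⟩ : b = 2 ∧ y = [1,5,1,2] := by simpa using h
    exact ⟨[1,3,1,5,1,2], by decide, cyc_fwd (U := [a+1]) (W := [1,3,1,5,1,2]) (T := v) (dih_of_eq (by simp)) (by decide)⟩

lemma case_iii (a b : ℕ) (z p₁ : List ℕ) (hp : p₁ ++ [a] ∈ pats12) :
    ∃ f ∈ pats12, CycContains ((a+1) :: 1 :: (b+1) :: (z ++ p₁)) f := by
  simp only [pats12, List.mem_cons, List.not_mem_nil, or_false] at hp
  rcases hp with h|h|h|h|h|h|h|h|h|h|h|h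
  · -- p = [1,2,2]
    rcases p₁ with _|⟨e1, p₁⟩
    · exact absurd h (by simp)
    rcases p₁ with _|⟨e2, p₁⟩
    · exact absurd h (by simp)
    rcases p₁ with _|⟨e3, p₁⟩
    · obtain ⟨rfl, rfl, rfl⟩ : e1 = 1 ∧ e2 = 2 ∧ a = 2 := by simpa using h
      exact ⟨[1,2,3,1], by decide, cyc_fwd (U := ([]:List ℕ)) (W := [1,2,3,1]) (T := (b+1) :: z) (dih_rot_helper (X := (3 :: 1 :: (b+1) :: z)) (Y := [1,2]) (by simp) (by simp)) (by decide)⟩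
    · exact absurd h (by simp)
  · -- p = [1,2,3,1]
    rcases p₁ with _|⟨e1, p₁⟩
    · exact absurd h (by simp)
    rcases p₁ with _|⟨e2, p₁⟩
    · exact absurd h (by simp)
    rcases p₁ with _|⟨e3, p₁⟩
    · exact absurd h (by simp)
    rcases p₁ with _|⟨e4, p₁⟩
    · obtain ⟨rfl, rfl, rfl, rfl⟩ : e1 = 1 ∧ e2 = 2 ∧ e3 = 3 ∧ a = 1 := by simpa using h
      exact ⟨[1,2,3,2,1], by decide, cyc_fwd (U := ([]:List ℕ)) (W := [1,2,3,2,1]) (T := (b+1) :: z) (dih_rot_helper (X := (2 :: 1 :: (b+1) :: z)) (Y := [1,2,3]) (by simp) (by simp)) (by decide)⟩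
    · exact absurd h (by simp)
  · -- p = [1,2,3,2,1]
    rcases p₁ with _|⟨e1, p₁⟩
    · exact absurd h (by simp)
    rcases p₁ with _|⟨e2, p₁⟩
    · exact absurd h (by simp)
    rcases p₁ with _|⟨e3, p₁⟩
    · exact absurd h (by simp)
    rcases p₁ with _|⟨e4, p₁⟩
    · exact absurd h (by simp)
    rcases p₁ with _|⟨e5, p₁⟩
    · obtain ⟨rfl, rfl, rfl, rfl, rfl⟩ : e1 = 1 ∧ e2 = 2 ∧ e3 = 3 ∧ e4 = 2 ∧ a = 1 := by simpa using h
      exact ⟨[1,2,2], by decide, cyc_rev (U := ([]:List ℕ)) (W := [1,2,3,2,2,1]) (T := (b+1) :: z) (dih_rot_helper (X := (2 :: 1 :: (b+1) :: z)) (Y := [1,2,3,2]) (by simp) (by simp)) (by decide)⟩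
    · exact absurd h (by simp)
  · -- p = [1,2,4,1,2]
    rcases p₁ with _|⟨e1, p₁⟩
    · exact absurd h (by simp)
    rcases p₁ with _|⟨e2, p₁⟩
    · exact absurd h (by simp)
    rcases p₁ with _|⟨e3, p₁⟩
    · exact absurd h (by simp)
    rcases p₁ with _|⟨e4, p₁⟩
    · exact absurd h (by simp)
    rcases p₁ with _|⟨e5, p₁⟩
    · obtain ⟨rfl, rfl, rfl, rfl, rfl⟩ : e1 = 1 ∧ e2 = 2 ∧ e3 = 4 ∧ e4 = 1 ∧ a = 2 := by simpa using h
      exact ⟨[1,2,4,1,3,1], by decide, cyc_fwd (U := ([]:List ℕ)) (W := [1,2,4,1,3,1]) (T := (b+1) :: z) (dih_rot_helper (X := (3 :: 1 :: (b+1) :: z)) (Y := [1,2,4,1]) (by simp) (by simp)) (by decide)⟩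
    · exact absurd h (by simp)
  · -- p = [1,2,4,1,3,1]
    rcases p₁ with _|⟨e1, p₁⟩
    · exact absurd h (by simp)
    rcases p₁ with _|⟨e2, p₁⟩
    · exact absurd h (by simp)
    rcases p₁ with _|⟨e3, p₁⟩
    · exact absurd h (by simp)
    rcases p₁ with _|⟨e4, p₁⟩
    · exact absurd h (by simp)
    rcases p₁ with _|⟨e5, p₁⟩
    · exact absurd h (by simp)
    rcases p₁ with _|⟨e6, p₁⟩
    · obtain ⟨rfl, rfl, rfl, rfl, rfl, rfl⟩ : e1 = 1 ∧ e2 = 2 ∧ e3 = 4 ∧ e4 = 1 ∧ e5 = 3 ∧ a = 1 := by simpa using h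
      exact ⟨[1,2,3,1], by decide, cyc_rev (U := ([]:List ℕ)) (W := [1,2,4,1,3,2,1]) (T := (b+1) :: z) (dih_rot_helper (X := (2 :: 1 :: (b+1) :: z)) (Y := [1,2,4,1,3]) (by simp) (by simp)) (by decide)⟩
    · exact absurd h (by simp)
  · -- p = [1,3,1,3]
    rcases p₁ with _|⟨e1, p₁⟩
    · exact absurd h (by simp)
    rcases p₁ with _|⟨e2, p₁⟩
    · exact absurd h (by simp)
    rcases p₁ with _|⟨e3, p₁⟩
    · exact absurd h (by simp)
    rcases p₁ with _|⟨e4, p₁⟩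
    · obtain ⟨rfl, rfl, rfl, rfl⟩ : e1 = 1 ∧ e2 = 3 ∧ e3 = 1 ∧ a = 3 := by simpa using h
      exact ⟨[1,3,1,4,1], by decide, cyc_fwd (U := ([]:List ℕ)) (W := [1,3,1,4,1]) (T := (b+1) :: z) (dih_rot_helper (X := (4 :: 1 :: (b+1) :: z)) (Y := [1,3,1]) (by simp) (by simp)) (by decide)⟩
    · exact absurd h (by simp)
  · -- p = [1,3,1,4,1]
    rcases p₁ with _|⟨e1, p₁⟩
    · exact absurd h (by simp)
    rcases p₁ with _|⟨e2, p₁⟩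
    · exact absurd h (by simp)
    rcases p₁ with _|⟨e3, p₁⟩
    · exact absurd h (by simp)
    rcases p₁ with _|⟨e4, p₁⟩
    · exact absurd h (by simp)
    rcases p₁ with _|⟨e5, p₁⟩
    · obtain ⟨rfl, rfl, rfl, rfl, rfl⟩ : e1 = 1 ∧ e2 = 3 ∧ e3 = 1 ∧ e4 = 4 ∧ a = 1 := by simpa using h
      exact ⟨[1,2,4,1,3,1], by decide, cyc_rev (U := ([]:List ℕ)) (W := [1,3,1,4,2,1]) (T := (b+1) :: z) (dih_rot_helper (X := (2 :: 1 :: (b+1) :: z)) (Y := [1,3,1,4]) (by simp) (by simp)) (by decide)⟩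
    · exact absurd h (by simp)
  · -- p = [1,3,1,5,1,2]
    rcases p₁ with _|⟨e1, p₁⟩
    · exact absurd h (by simp)
    rcases p₁ with _|⟨e2, p₁⟩
    · exact absurd h (by simp)
    rcases p₁ with _|⟨e3, p₁⟩
    · exact absurd h (by simp)
    rcases p₁ with _|⟨e4, p₁⟩
    · exact absurd h (by simp)
    rcases p₁ with _|⟨e5, p₁⟩
    · exact absurd h (by simp)
    rcases p₁ with _|⟨e6, p₁⟩
    · obtain ⟨rfl, rfl, rfl, rfl, rfl, rfl⟩ : e1 = 1 ∧ e2 = 3 ∧ e3 = 1 ∧ e4 = 5 ∧ e5 = 1 ∧ a = 2 := by simpa using h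
      exact ⟨[1,3,1,5,1,3,1], by decide, cyc_fwd (U := ([]:List ℕ)) (W := [1,3,1,5,1,3,1]) (T := (b+1) :: z) (dih_rot_helper (X := (3 :: 1 :: (b+1) :: z)) (Y := [1,3,1,5,1]) (by simp) (by simp)) (by decide)⟩
    · exact absurd h (by simp)
  · -- p = [1,3,1,5,1,3,1]
    rcases p₁ with _|⟨e1, p₁⟩
    · exact absurd h (by simp)
    rcases p₁ with _|⟨e2, p₁⟩
    · exact absurd h (by simp)
    rcases p₁ with _|⟨e3, p₁⟩
    · exact absurd h (by simp)
    rcases p₁ with _|⟨e4, p₁⟩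
    · exact absurd h (by simp)
    rcases p₁ with _|⟨e5, p₁⟩
    · exact absurd h (by simp)
    rcases p₁ with _|⟨e6, p₁⟩
    · exact absurd h (by simp)
    rcases p₁ with _|⟨e7, p₁⟩
    · obtain ⟨rfl, rfl, rfl, rfl, rfl, rfl, rfl⟩ : e1 = 1 ∧ e2 = 3 ∧ e3 = 1 ∧ e4 = 5 ∧ e5 = 1 ∧ e6 = 3 ∧ a = 1 := by simpa using h
      exact ⟨[1,2,3,1], by decide, cyc_rev (U := ([]:List ℕ)) (W := [1,3,1,5,1,3,2,1]) (T := (b+1) :: z) (dih_rot_helper (X := (2 :: 1 :: (b+1) :: z)) (Y := [1,3,1,5,1,3]) (by simp) (by simp)) (by decide)⟩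
    · exact absurd h (by simp)
  · -- p = [1,4,1,2]
    rcases p₁ with _|⟨e1, p₁⟩
    · exact absurd h (by simp)
    rcases p₁ with _|⟨e2, p₁⟩
    · exact absurd h (by simp)
    rcases p₁ with _|⟨e3, p₁⟩
    · exact absurd h (by simp)
    rcases p₁ with _|⟨e4, p₁⟩
    · obtain ⟨rfl, rfl, rfl, rfl⟩ : e1 = 1 ∧ e2 = 4 ∧ e3 = 1 ∧ a = 2 := by simpa using h
      exact ⟨[1,3,1,4,1], by decide, cyc_rev (U := ([]:List ℕ)) (W := [1,4,1,3,1]) (T := (b+1) :: z) (dih_rot_helper (X := (3 :: 1 :: (b+1) :: z)) (Y := [1,4,1]) (by simp) (by simp)) (by decide)⟩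
    · exact absurd h (by simp)
  · -- p = [2,1,3]
    rcases p₁ with _|⟨e1, p₁⟩
    · exact absurd h (by simp)
    rcases p₁ with _|⟨e2, p₁⟩
    · exact absurd h (by simp)
    rcases p₁ with _|⟨e3, p₁⟩
    · obtain ⟨rfl, rfl, rfl⟩ : e1 = 2 ∧ e2 = 1 ∧ a = 3 := by simpa using h
      exact ⟨[1,4,1,2], by decide, cyc_rev (U := ([]:List ℕ)) (W := [2,1,4,1]) (T := (b+1) :: z) (dih_rot_helper (X := (4 :: 1 :: (b+1) :: z)) (Y := [2,1]) (by simp) (by simp)) (by decide)⟩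
    · exact absurd h (by simp)
  · -- p = [2,1,5,1,2]
    rcases p₁ with _|⟨e1, p₁⟩
    · exact absurd h (by simp)
    rcases p₁ with _|⟨e2, p₁⟩
    · exact absurd h (by simp)
    rcases p₁ with _|⟨e3, p₁⟩
    · exact absurd h (by simp)
    rcases p₁ with _|⟨e4, p₁⟩
    · exact absurd h (by simp)
    rcases p₁ with _|⟨e5, p₁⟩
    · obtain ⟨rfl, rfl, rfl, rfl, rfl⟩ : e1 = 2 ∧ e2 = 1 ∧ e3 = 5 ∧ e4 = 1 ∧ a = 2 := by simpa using h
      exact ⟨[1,3,1,5,1,2], by decide, cyc_rev (U := ([]:List ℕ)) (W := [2,1,5,1,3,1]) (T := (b+1) :: z) (dih_rot_helper (X := (3 :: 1 :: (b+1) :: z)) (Y := [2,1,5,1]) (by simp) (by simp)) (by decide)⟩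
    · exact absurd h (by simp)

lemma case_iv (a b : ℕ) (x y m : List ℕ) (hp : x ++ a :: b :: y ∈ pats12) :
    ∃ f ∈ pats12, CycContains ((a+1) :: 1 :: (b+1) :: (y ++ m ++ x)) f := by
  simp only [pats12, List.mem_cons, List.not_mem_nil, or_false] at hp
  rcases hp with h|h|h|h|h|h|h|h|h|h|h|h
  · -- p = [1,2,2]
    rcases x with _|⟨e1, x⟩
    · obtain ⟨rfl, rfl, rfl⟩ : a = 1 ∧ b = 2 ∧ y = [2] := by simpa using h
      exact ⟨[2,1,3], by decide, cyc_fwd (U := ([]:List ℕ)) (W := [2,1,3,2]) (T := m) (dih_rot_helper (X := ((2 :: 1 :: 3 :: ([2] : List ℕ)) ++ m)) (Y := ([] : List ℕ)) (by simp) (by simp)) (by decide)⟩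
    rcases x with _|⟨e2, x⟩
    · obtain ⟨rfl, rfl, rfl, rfl⟩ : e1 = 1 ∧ a = 2 ∧ b = 2 ∧ y = [] := by simpa using h
      exact ⟨[1,3,1,3], by decide, cyc_fwd (U := ([]:List ℕ)) (W := [1,3,1,3]) (T := m) (dih_rot_helper (X := ((3 :: 1 :: 3 :: ([] : List ℕ)) ++ m)) (Y := ([1] : List ℕ)) (by simp) (by simp)) (by decide)⟩
    have hL := congrArg List.length h
    simp only [List.length_cons, List.length_append, List.length_nil] at hL
    omega
  · -- p = [1,2,3,1]
    rcases x with _|⟨e1, x⟩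
    · obtain ⟨rfl, rfl, rfl⟩ : a = 1 ∧ b = 2 ∧ y = [3,1] := by simpa using h
      exact ⟨[2,1,3], by decide, cyc_fwd (U := ([]:List ℕ)) (W := [2,1,3,3,1]) (T := m) (dih_rot_helper (X := ((2 :: 1 :: 3 :: ([3,1] : List ℕ)) ++ m)) (Y := ([] : List ℕ)) (by simp) (by simp)) (by decide)⟩
    rcases x with _|⟨e2, x⟩
    · obtain ⟨rfl, rfl, rfl, rfl⟩ : e1 = 1 ∧ a = 2 ∧ b = 3 ∧ y = [1] := by simpa using h
      exact ⟨[1,3,1,4,1], by decide, cyc_fwd (U := ([]:List ℕ)) (W := [1,3,1,4,1]) (T := m) (dih_rot_helper (X := ((3 :: 1 :: 4 :: ([1] : List ℕ)) ++ m)) (Y := ([1] : List ℕ)) (by simp) (by simp)) (by decide)⟩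
    rcases x with _|⟨e3, x⟩
    · obtain ⟨rfl, rfl, rfl, rfl, rfl⟩ : e1 = 1 ∧ e2 = 2 ∧ a = 3 ∧ b = 1 ∧ y = [] := by simpa using h
      exact ⟨[1,2,4,1,2], by decide, cyc_fwd (U := ([]:List ℕ)) (W := [1,2,4,1,2]) (T := m) (dih_rot_helper (X := ((4 :: 1 :: 2 :: ([] : List ℕ)) ++ m)) (Y := ([1,2] : List ℕ)) (by simp) (by simp)) (by decide)⟩
    have hL := congrArg List.length h
    simp only [List.length_cons, List.length_append, List.length_nil] at hL
    omega
  · -- p = [1,2,3,2,1]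
    rcases x with _|⟨e1, x⟩
    · obtain ⟨rfl, rfl, rfl⟩ : a = 1 ∧ b = 2 ∧ y = [3,2,1] := by simpa using h
      exact ⟨[2,1,3], by decide, cyc_fwd (U := ([]:List ℕ)) (W := [2,1,3,3,2,1]) (T := m) (dih_rot_helper (X := ((2 :: 1 :: 3 :: ([3,2,1] : List ℕ)) ++ m)) (Y := ([] : List ℕ)) (by simp) (by simp)) (by decide)⟩
    rcases x with _|⟨e2, x⟩
    · obtain ⟨rfl, rfl, rfl, rfl⟩ : e1 = 1 ∧ a = 2 ∧ b = 3 ∧ y = [2,1] := by simpa using h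
      exact ⟨[1,2,4,1,3,1], by decide, cyc_rev (U := ([]:List ℕ)) (W := [1,3,1,4,2,1]) (T := m) (dih_rot_helper (X := ((3 :: 1 :: 4 :: ([2,1] : List ℕ)) ++ m)) (Y := ([1] : List ℕ)) (by simp) (by simp)) (by decide)⟩
    rcases x with _|⟨e3, x⟩
    · obtain ⟨rfl, rfl, rfl, rfl, rfl⟩ : e1 = 1 ∧ e2 = 2 ∧ a = 3 ∧ b = 2 ∧ y = [1] := by simpa using h
      exact ⟨[1,2,4,1,3,1], by decide, cyc_fwd (U := ([]:List ℕ)) (W := [1,2,4,1,3,1]) (T := m) (dih_rot_helper (X := ((4 :: 1 :: 3 :: ([1] : List ℕ)) ++ m)) (Y := ([1,2] : List ℕ)) (by simp) (by simp)) (by decide)⟩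
    rcases x with _|⟨e4, x⟩
    · obtain ⟨rfl, rfl, rfl, rfl, rfl, rfl⟩ : e1 = 1 ∧ e2 = 2 ∧ e3 = 3 ∧ a = 2 ∧ b = 1 ∧ y = [] := by simpa using h
      exact ⟨[2,1,3], by decide, cyc_rev (U := ([]:List ℕ)) (W := [1,2,3,3,1,2]) (T := m) (dih_rot_helper (X := ((3 :: 1 :: 2 :: ([] : List ℕ)) ++ m)) (Y := ([1,2,3] : List ℕ)) (by simp) (by simp)) (by decide)⟩
    have hL := congrArg List.length h
    simp only [List.length_cons, List.length_append, List.length_nil] at hL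
    omega
  · -- p = [1,2,4,1,2]
    rcases x with _|⟨e1, x⟩
    · obtain ⟨rfl, rfl, rfl⟩ : a = 1 ∧ b = 2 ∧ y = [4,1,2] := by simpa using h
      exact ⟨[2,1,3], by decide, cyc_fwd (U := ([]:List ℕ)) (W := [2,1,3,4,1,2]) (T := m) (dih_rot_helper (X := ((2 :: 1 :: 3 :: ([4,1,2] : List ℕ)) ++ m)) (Y := ([] : List ℕ)) (by simp) (by simp)) (by decide)⟩
    rcases x with _|⟨e2, x⟩
    · obtain ⟨rfl, rfl, rfl, rfl⟩ : e1 = 1 ∧ a = 2 ∧ b = 4 ∧ y = [1,2] := by simpa using h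
      exact ⟨[1,3,1,5,1,2], by decide, cyc_fwd (U := ([]:List ℕ)) (W := [1,3,1,5,1,2]) (T := m) (dih_rot_helper (X := ((3 :: 1 :: 5 :: ([1,2] : List ℕ)) ++ m)) (Y := ([1] : List ℕ)) (by simp) (by simp)) (by decide)⟩
    rcases x with _|⟨e3, x⟩
    · obtain ⟨rfl, rfl, rfl, rfl, rfl⟩ : e1 = 1 ∧ e2 = 2 ∧ a = 4 ∧ b = 1 ∧ y = [2] := by simpa using h
      exact ⟨[1,2,2], by decide, cyc_fwd (U := ([]:List ℕ)) (W := [1,2,5,1,2,2]) (T := m) (dih_rot_helper (X := ((5 :: 1 :: 2 :: ([2] : List ℕ)) ++ m)) (Y := ([1,2] : List ℕ)) (by simp) (by simp)) (by decide)⟩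
    rcases x with _|⟨e4, x⟩
    · obtain ⟨rfl, rfl, rfl, rfl, rfl, rfl⟩ : e1 = 1 ∧ e2 = 2 ∧ e3 = 4 ∧ a = 1 ∧ b = 2 ∧ y = [] := by simpa using h
      exact ⟨[2,1,3], by decide, cyc_fwd (U := ([]:List ℕ)) (W := [1,2,4,2,1,3]) (T := m) (dih_rot_helper (X := ((2 :: 1 :: 3 :: ([] : List ℕ)) ++ m)) (Y := ([1,2,4] : List ℕ)) (by simp) (by simp)) (by decide)⟩
    have hL := congrArg List.length h
    simp only [List.length_cons, List.length_append, List.length_nil] at hL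
    omega
  · -- p = [1,2,4,1,3,1]
    rcases x with _|⟨e1, x⟩
    · obtain ⟨rfl, rfl, rfl⟩ : a = 1 ∧ b = 2 ∧ y = [4,1,3,1] := by simpa using h
      exact ⟨[2,1,3], by decide, cyc_fwd (U := ([]:List ℕ)) (W := [2,1,3,4,1,3,1]) (T := m) (dih_rot_helper (X := ((2 :: 1 :: 3 :: ([4,1,3,1] : List ℕ)) ++ m)) (Y := ([] : List ℕ)) (by simp) (by simp)) (by decide)⟩
    rcases x with _|⟨e2, x⟩
    · obtain ⟨rfl, rfl, rfl, rfl⟩ : e1 = 1 ∧ a = 2 ∧ b = 4 ∧ y = [1,3,1] := by simpa using h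
      exact ⟨[1,3,1,5,1,3,1], by decide, cyc_fwd (U := ([]:List ℕ)) (W := [1,3,1,5,1,3,1]) (T := m) (dih_rot_helper (X := ((3 :: 1 :: 5 :: ([1,3,1] : List ℕ)) ++ m)) (Y := ([1] : List ℕ)) (by simp) (by simp)) (by decide)⟩
    rcases x with _|⟨e3, x⟩
    · obtain ⟨rfl, rfl, rfl, rfl, rfl⟩ : e1 = 1 ∧ e2 = 2 ∧ a = 4 ∧ b = 1 ∧ y = [3,1] := by simpa using h
      exact ⟨[1,2,3,1], by decide, cyc_fwd (U := ([]:List ℕ)) (W := [1,2,5,1,2,3,1]) (T := m) (dih_rot_helper (X := ((5 :: 1 :: 2 :: ([3,1] : List ℕ)) ++ m)) (Y := ([1,2] : List ℕ)) (by simp) (by simp)) (by decide)⟩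
    rcases x with _|⟨e4, x⟩
    · obtain ⟨rfl, rfl, rfl, rfl, rfl, rfl⟩ : e1 = 1 ∧ e2 = 2 ∧ e3 = 4 ∧ a = 1 ∧ b = 3 ∧ y = [1] := by simpa using h
      exact ⟨[1,4,1,2], by decide, cyc_rev (U := ([]:List ℕ)) (W := [1,2,4,2,1,4,1]) (T := m) (dih_rot_helper (X := ((2 :: 1 :: 4 :: ([1] : List ℕ)) ++ m)) (Y := ([1,2,4] : List ℕ)) (by simp) (by simp)) (by decide)⟩
    rcases x with _|⟨e5, x⟩
    · obtain ⟨rfl, rfl, rfl, rfl, rfl, rfl, rfl⟩ : e1 = 1 ∧ e2 = 2 ∧ e3 = 4 ∧ e4 = 1 ∧ a = 3 ∧ b = 1 ∧ y = [] := by simpa using h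
      exact ⟨[1,4,1,2], by decide, cyc_fwd (U := ([]:List ℕ)) (W := [1,2,4,1,4,1,2]) (T := m) (dih_rot_helper (X := ((4 :: 1 :: 2 :: ([] : List ℕ)) ++ m)) (Y := ([1,2,4,1] : List ℕ)) (by simp) (by simp)) (by decide)⟩
    have hL := congrArg List.length h
    simp only [List.length_cons, List.length_append, List.length_nil] at hL
    omega
  · -- p = [1,3,1,3]
    rcases x with _|⟨e1, x⟩
    · obtain ⟨rfl, rfl, rfl⟩ : a = 1 ∧ b = 3 ∧ y = [1,3] := by simpa using h
      exact ⟨[1,4,1,2], by decide, cyc_rev (U := ([]:List ℕ)) (W := [2,1,4,1,3]) (T := m) (dih_rot_helper (X := ((2 :: 1 :: 4 :: ([1,3] : List ℕ)) ++ m)) (Y := ([] : List ℕ)) (by simp) (by simp)) (by decide)⟩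
    rcases x with _|⟨e2, x⟩
    · obtain ⟨rfl, rfl, rfl, rfl⟩ : e1 = 1 ∧ a = 3 ∧ b = 1 ∧ y = [3] := by simpa using h
      exact ⟨[1,4,1,2], by decide, cyc_fwd (U := ([]:List ℕ)) (W := [1,4,1,2,3]) (T := m) (dih_rot_helper (X := ((4 :: 1 :: 2 :: ([3] : List ℕ)) ++ m)) (Y := ([1] : List ℕ)) (by simp) (by simp)) (by decide)⟩
    rcases x with _|⟨e3, x⟩
    · obtain ⟨rfl, rfl, rfl, rfl, rfl⟩ : e1 = 1 ∧ e2 = 3 ∧ a = 1 ∧ b = 3 ∧ y = [] := by simpa using h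
      exact ⟨[1,2,3,1], by decide, cyc_rev (U := ([]:List ℕ)) (W := [1,3,2,1,4]) (T := m) (dih_rot_helper (X := ((2 :: 1 :: 4 :: ([] : List ℕ)) ++ m)) (Y := ([1,3] : List ℕ)) (by simp) (by simp)) (by decide)⟩
    have hL := congrArg List.length h
    simp only [List.length_cons, List.length_append, List.length_nil] at hL
    omega
  · -- p = [1,3,1,4,1]
    rcases x with _|⟨e1, x⟩
    · obtain ⟨rfl, rfl, rfl⟩ : a = 1 ∧ b = 3 ∧ y = [1,4,1] := by simpa using h
      exact ⟨[1,4,1,2], by decide, cyc_rev (U := ([]:List ℕ)) (W := [2,1,4,1,4,1]) (T := m) (dih_rot_helper (X := ((2 :: 1 :: 4 :: ([1,4,1] : List ℕ)) ++ m)) (Y := ([] : List ℕ)) (by simp) (by simp)) (by decide)⟩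
    rcases x with _|⟨e2, x⟩
    · obtain ⟨rfl, rfl, rfl, rfl⟩ : e1 = 1 ∧ a = 3 ∧ b = 1 ∧ y = [4,1] := by simpa using h
      exact ⟨[1,4,1,2], by decide, cyc_fwd (U := ([]:List ℕ)) (W := [1,4,1,2,4,1]) (T := m) (dih_rot_helper (X := ((4 :: 1 :: 2 :: ([4,1] : List ℕ)) ++ m)) (Y := ([1] : List ℕ)) (by simp) (by simp)) (by decide)⟩
    rcases x with _|⟨e3, x⟩
    · obtain ⟨rfl, rfl, rfl, rfl, rfl⟩ : e1 = 1 ∧ e2 = 3 ∧ a = 1 ∧ b = 4 ∧ y = [1] := by simpa using h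
      exact ⟨[1,2,3,1], by decide, cyc_rev (U := ([]:List ℕ)) (W := [1,3,2,1,5,1]) (T := m) (dih_rot_helper (X := ((2 :: 1 :: 5 :: ([1] : List ℕ)) ++ m)) (Y := ([1,3] : List ℕ)) (by simp) (by simp)) (by decide)⟩
    rcases x with _|⟨e4, x⟩
    · obtain ⟨rfl, rfl, rfl, rfl, rfl, rfl⟩ : e1 = 1 ∧ e2 = 3 ∧ e3 = 1 ∧ a = 4 ∧ b = 1 ∧ y = [] := by simpa using h
      exact ⟨[1,3,1,5,1,2], by decide, cyc_fwd (U := ([]:List ℕ)) (W := [1,3,1,5,1,2]) (T := m) (dih_rot_helper (X := ((5 :: 1 :: 2 :: ([] : List ℕ)) ++ m)) (Y := ([1,3,1] : List ℕ)) (by simp) (by simp)) (by decide)⟩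
    have hL := congrArg List.length h
    simp only [List.length_cons, List.length_append, List.length_nil] at hL
    omega
  · -- p = [1,3,1,5,1,2]
    rcases x with _|⟨e1, x⟩
    · obtain ⟨rfl, rfl, rfl⟩ : a = 1 ∧ b = 3 ∧ y = [1,5,1,2] := by simpa using h
      exact ⟨[1,4,1,2], by decide, cyc_rev (U := ([]:List ℕ)) (W := [2,1,4,1,5,1,2]) (T := m) (dih_rot_helper (X := ((2 :: 1 :: 4 :: ([1,5,1,2] : List ℕ)) ++ m)) (Y := ([] : List ℕ)) (by simp) (by simp)) (by decide)⟩
    rcases x with _|⟨e2, x⟩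
    · obtain ⟨rfl, rfl, rfl, rfl⟩ : e1 = 1 ∧ a = 3 ∧ b = 1 ∧ y = [5,1,2] := by simpa using h
      exact ⟨[1,4,1,2], by decide, cyc_fwd (U := ([]:List ℕ)) (W := [1,4,1,2,5,1,2]) (T := m) (dih_rot_helper (X := ((4 :: 1 :: 2 :: ([5,1,2] : List ℕ)) ++ m)) (Y := ([1] : List ℕ)) (by simp) (by simp)) (by decide)⟩
    rcases x with _|⟨e3, x⟩
    · obtain ⟨rfl, rfl, rfl, rfl, rfl⟩ : e1 = 1 ∧ e2 = 3 ∧ a = 1 ∧ b = 5 ∧ y = [1,2] := by simpa using h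
      exact ⟨[1,2,3,1], by decide, cyc_rev (U := ([]:List ℕ)) (W := [1,3,2,1,6,1,2]) (T := m) (dih_rot_helper (X := ((2 :: 1 :: 6 :: ([1,2] : List ℕ)) ++ m)) (Y := ([1,3] : List ℕ)) (by simp) (by simp)) (by decide)⟩
    rcases x with _|⟨e4, x⟩
    · obtain ⟨rfl, rfl, rfl, rfl, rfl, rfl⟩ : e1 = 1 ∧ e2 = 3 ∧ e3 = 1 ∧ a = 5 ∧ b = 1 ∧ y = [2] := by simpa using h
      exact ⟨[1,2,2], by decide, cyc_fwd (U := ([]:List ℕ)) (W := [1,3,1,6,1,2,2]) (T := m) (dih_rot_helper (X := ((6 :: 1 :: 2 :: ([2] : List ℕ)) ++ m)) (Y := ([1,3,1] : List ℕ)) (by simp) (by simp)) (by decide)⟩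
    rcases x with _|⟨e5, x⟩
    · obtain ⟨rfl, rfl, rfl, rfl, rfl, rfl, rfl⟩ : e1 = 1 ∧ e2 = 3 ∧ e3 = 1 ∧ e4 = 5 ∧ a = 1 ∧ b = 2 ∧ y = [] := by simpa using h
      exact ⟨[2,1,3], by decide, cyc_fwd (U := ([]:List ℕ)) (W := [1,3,1,5,2,1,3]) (T := m) (dih_rot_helper (X := ((2 :: 1 :: 3 :: ([] : List ℕ)) ++ m)) (Y := ([1,3,1,5] : List ℕ)) (by simp) (by simp)) (by decide)⟩
    have hL := congrArg List.length h
    simp only [List.length_cons, List.length_append, List.length_nil] at hL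
    omega
  · -- p = [1,3,1,5,1,3,1]
    rcases x with _|⟨e1, x⟩
    · obtain ⟨rfl, rfl, rfl⟩ : a = 1 ∧ b = 3 ∧ y = [1,5,1,3,1] := by simpa using h
      exact ⟨[1,4,1,2], by decide, cyc_rev (U := ([]:List ℕ)) (W := [2,1,4,1,5,1,3,1]) (T := m) (dih_rot_helper (X := ((2 :: 1 :: 4 :: ([1,5,1,3,1] : List ℕ)) ++ m)) (Y := ([] : List ℕ)) (by simp) (by simp)) (by decide)⟩
    rcases x with _|⟨e2, x⟩
    · obtain ⟨rfl, rfl, rfl, rfl⟩ : e1 = 1 ∧ a = 3 ∧ b = 1 ∧ y = [5,1,3,1] := by simpa using h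
      exact ⟨[1,4,1,2], by decide, cyc_fwd (U := ([]:List ℕ)) (W := [1,4,1,2,5,1,3,1]) (T := m) (dih_rot_helper (X := ((4 :: 1 :: 2 :: ([5,1,3,1] : List ℕ)) ++ m)) (Y := ([1] : List ℕ)) (by simp) (by simp)) (by decide)⟩
    rcases x with _|⟨e3, x⟩
    · obtain ⟨rfl, rfl, rfl, rfl, rfl⟩ : e1 = 1 ∧ e2 = 3 ∧ a = 1 ∧ b = 5 ∧ y = [1,3,1] := by simpa using h
      exact ⟨[1,2,3,1], by decide, cyc_rev (U := ([]:List ℕ)) (W := [1,3,2,1,6,1,3,1]) (T := m) (dih_rot_helper (X := ((2 :: 1 :: 6 :: ([1,3,1] : List ℕ)) ++ m)) (Y := ([1,3] : List ℕ)) (by simp) (by simp)) (by decide)⟩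
    rcases x with _|⟨e4, x⟩
    · obtain ⟨rfl, rfl, rfl, rfl, rfl, rfl⟩ : e1 = 1 ∧ e2 = 3 ∧ e3 = 1 ∧ a = 5 ∧ b = 1 ∧ y = [3,1] := by simpa using h
      exact ⟨[1,2,3,1], by decide, cyc_fwd (U := ([]:List ℕ)) (W := [1,3,1,6,1,2,3,1]) (T := m) (dih_rot_helper (X := ((6 :: 1 :: 2 :: ([3,1] : List ℕ)) ++ m)) (Y := ([1,3,1] : List ℕ)) (by simp) (by simp)) (by decide)⟩
    rcases x with _|⟨e5, x⟩
    · obtain ⟨rfl, rfl, rfl, rfl, rfl, rfl, rfl⟩ : e1 = 1 ∧ e2 = 3 ∧ e3 = 1 ∧ e4 = 5 ∧ a = 1 ∧ b = 3 ∧ y = [1] := by simpa using h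
      exact ⟨[1,4,1,2], by decide, cyc_rev (U := ([]:List ℕ)) (W := [1,3,1,5,2,1,4,1]) (T := m) (dih_rot_helper (X := ((2 :: 1 :: 4 :: ([1] : List ℕ)) ++ m)) (Y := ([1,3,1,5] : List ℕ)) (by simp) (by simp)) (by decide)⟩
    rcases x with _|⟨e6, x⟩
    · obtain ⟨rfl, rfl, rfl, rfl, rfl, rfl, rfl, rfl⟩ : e1 = 1 ∧ e2 = 3 ∧ e3 = 1 ∧ e4 = 5 ∧ e5 = 1 ∧ a = 3 ∧ b = 1 ∧ y = [] := by simpa using h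
      exact ⟨[1,4,1,2], by decide, cyc_fwd (U := ([]:List ℕ)) (W := [1,3,1,5,1,4,1,2]) (T := m) (dih_rot_helper (X := ((4 :: 1 :: 2 :: ([] : List ℕ)) ++ m)) (Y := ([1,3,1,5,1] : List ℕ)) (by simp) (by simp)) (by decide)⟩
    have hL := congrArg List.length h
    simp only [List.length_cons, List.length_append, List.length_nil] at hL
    omega
  · -- p = [1,4,1,2]
    rcases x with _|⟨e1, x⟩
    · obtain ⟨rfl, rfl, rfl⟩ : a = 1 ∧ b = 4 ∧ y = [1,2] := by simpa using h
      exact ⟨[2,1,5,1,2], by decide, cyc_fwd (U := ([]:List ℕ)) (W := [2,1,5,1,2]) (T := m) (dih_rot_helper (X := ((2 :: 1 :: 5 :: ([1,2] : List ℕ)) ++ m)) (Y := ([] : List ℕ)) (by simp) (by simp)) (by decide)⟩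
    rcases x with _|⟨e2, x⟩
    · obtain ⟨rfl, rfl, rfl, rfl⟩ : e1 = 1 ∧ a = 4 ∧ b = 1 ∧ y = [2] := by simpa using h
      exact ⟨[1,2,2], by decide, cyc_fwd (U := ([]:List ℕ)) (W := [1,5,1,2,2]) (T := m) (dih_rot_helper (X := ((5 :: 1 :: 2 :: ([2] : List ℕ)) ++ m)) (Y := ([1] : List ℕ)) (by simp) (by simp)) (by decide)⟩
    rcases x with _|⟨e3, x⟩
    · obtain ⟨rfl, rfl, rfl, rfl, rfl⟩ : e1 = 1 ∧ e2 = 4 ∧ a = 1 ∧ b = 2 ∧ y = [] := by simpa using h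
      exact ⟨[2,1,3], by decide, cyc_fwd (U := ([]:List ℕ)) (W := [1,4,2,1,3]) (T := m) (dih_rot_helper (X := ((2 :: 1 :: 3 :: ([] : List ℕ)) ++ m)) (Y := ([1,4] : List ℕ)) (by simp) (by simp)) (by decide)⟩
    have hL := congrArg List.length h
    simp only [List.length_cons, List.length_append, List.length_nil] at hL
    omega
  · -- p = [2,1,3]
    rcases x with _|⟨e1, x⟩
    · obtain ⟨rfl, rfl, rfl⟩ : a = 2 ∧ b = 1 ∧ y = [3] := by simpa using h
      exact ⟨[2,1,3], by decide, cyc_rev (U := ([]:List ℕ)) (W := [3,1,2,3]) (T := m) (dih_rot_helper (X := ((3 :: 1 :: 2 :: ([3] : List ℕ)) ++ m)) (Y := ([] : List ℕ)) (by simp) (by simp)) (by decide)⟩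
    rcases x with _|⟨e2, x⟩
    · obtain ⟨rfl, rfl, rfl, rfl⟩ : e1 = 2 ∧ a = 1 ∧ b = 3 ∧ y = [] := by simpa using h
      exact ⟨[1,2,2], by decide, cyc_rev (U := ([]:List ℕ)) (W := [2,2,1,4]) (T := m) (dih_rot_helper (X := ((2 :: 1 :: 4 :: ([] : List ℕ)) ++ m)) (Y := ([2] : List ℕ)) (by simp) (by simp)) (by decide)⟩
    have hL := congrArg List.length h
    simp only [List.length_cons, List.length_append, List.length_nil] at hL
    omega
  · -- p = [2,1,5,1,2]
    rcases x with _|⟨e1, x⟩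
    · obtain ⟨rfl, rfl, rfl⟩ : a = 2 ∧ b = 1 ∧ y = [5,1,2] := by simpa using h
      exact ⟨[2,1,3], by decide, cyc_rev (U := ([]:List ℕ)) (W := [3,1,2,5,1,2]) (T := m) (dih_rot_helper (X := ((3 :: 1 :: 2 :: ([5,1,2] : List ℕ)) ++ m)) (Y := ([] : List ℕ)) (by simp) (by simp)) (by decide)⟩
    rcases x with _|⟨e2, x⟩
    · obtain ⟨rfl, rfl, rfl, rfl⟩ : e1 = 2 ∧ a = 1 ∧ b = 5 ∧ y = [1,2] := by simpa using h
      exact ⟨[1,2,2], by decide, cyc_rev (U := ([]:List ℕ)) (W := [2,2,1,6,1,2]) (T := m) (dih_rot_helper (X := ((2 :: 1 :: 6 :: ([1,2] : List ℕ)) ++ m)) (Y := ([2] : List ℕ)) (by simp) (by simp)) (by decide)⟩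
    rcases x with _|⟨e3, x⟩
    · obtain ⟨rfl, rfl, rfl, rfl, rfl⟩ : e1 = 2 ∧ e2 = 1 ∧ a = 5 ∧ b = 1 ∧ y = [2] := by simpa using h
      exact ⟨[1,2,2], by decide, cyc_fwd (U := ([]:List ℕ)) (W := [2,1,6,1,2,2]) (T := m) (dih_rot_helper (X := ((6 :: 1 :: 2 :: ([2] : List ℕ)) ++ m)) (Y := ([2,1] : List ℕ)) (by simp) (by simp)) (by decide)⟩
    rcases x with _|⟨e4, x⟩
    · obtain ⟨rfl, rfl, rfl, rfl, rfl, rfl⟩ : e1 = 2 ∧ e2 = 1 ∧ e3 = 5 ∧ a = 1 ∧ b = 2 ∧ y = [] := by simpa using h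
      exact ⟨[2,1,3], by decide, cyc_fwd (U := ([]:List ℕ)) (W := [2,1,5,2,1,3]) (T := m) (dih_rot_helper (X := ((2 :: 1 :: 3 :: ([] : List ℕ)) ++ m)) (Y := ([2,1,5] : List ℕ)) (by simp) (by simp)) (by decide)⟩
    have hL := congrArg List.length h
    simp only [List.length_cons, List.length_append, List.length_nil] at hL
    omega

lemma case_v (a b : ℕ) (t : List ℕ) (hq : IsQuiddity (a :: b :: t)) (hp : b :: (t ++ [a]) ∈ pats12) :
    ∃ f ∈ pats12, CycContains ((a+1) :: 1 :: (b+1) :: t) f := by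
  simp only [pats12, List.mem_cons, List.not_mem_nil, or_false] at hp
  rcases hp with h|h|h|h|h|h|h|h|h|h|h|h
  · -- p = [1,2,2]
    rcases t with _|⟨e1, t⟩
    · exact absurd h (by simp)
    rcases t with _|⟨e2, t⟩
    · obtain ⟨rfl, rfl, rfl⟩ : b = 1 ∧ e1 = 2 ∧ a = 2 := by simpa using h
      exact ⟨[1,2,2], by decide, ([3,1,2,2] : List ℕ), dih_of_eq (by simp), by decide⟩
    · exact absurd h (by simp)
  · -- p = [1,2,3,1]
    rcases t with _|⟨e1, t⟩
    · exact absurd h (by simp)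
    rcases t with _|⟨e2, t⟩
    · exact absurd h (by simp)
    rcases t with _|⟨e3, t⟩
    · obtain ⟨rfl, rfl, rfl, rfl⟩ : b = 1 ∧ e1 = 2 ∧ e2 = 3 ∧ a = 1 := by simpa using h
      exact ⟨[1,2,2], by decide, ([2,1,2,2,3] : List ℕ), dih_of_eq (by simp), by decide⟩
    · exact absurd h (by simp)
  · -- p = [1,2,3,2,1]
    rcases t with _|⟨e1, t⟩
    · exact absurd h (by simp)
    rcases t with _|⟨e2, t⟩
    · exact absurd h (by simp)
    rcases t with _|⟨e3, t⟩
    · exact absurd h (by simp)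
    rcases t with _|⟨e4, t⟩
    · obtain ⟨rfl, rfl, rfl, rfl, rfl⟩ : b = 1 ∧ e1 = 2 ∧ e2 = 3 ∧ e3 = 2 ∧ a = 1 := by simpa using h
      exact ⟨[1,2,2], by decide, ([2,1,2,2,3,2] : List ℕ), dih_of_eq (by simp), by decide⟩
    · exact absurd h (by simp)
  · -- p = [1,2,4,1,2]
    rcases t with _|⟨e1, t⟩
    · exact absurd h (by simp)
    rcases t with _|⟨e2, t⟩
    · exact absurd h (by simp)
    rcases t with _|⟨e3, t⟩
    · exact absurd h (by simp)
    rcases t with _|⟨e4, t⟩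
    · obtain ⟨rfl, rfl, rfl, rfl, rfl⟩ : b = 1 ∧ e1 = 2 ∧ e2 = 4 ∧ e3 = 1 ∧ a = 2 := by simpa using h
      exact ⟨[1,2,2], by decide, ([3,1,2,2,4,1] : List ℕ), dih_of_eq (by simp), by decide⟩
    · exact absurd h (by simp)
  · -- p = [1,2,4,1,3,1]
    rcases t with _|⟨e1, t⟩
    · exact absurd h (by simp)
    rcases t with _|⟨e2, t⟩
    · exact absurd h (by simp)
    rcases t with _|⟨e3, t⟩
    · exact absurd h (by simp)
    rcases t with _|⟨e4, t⟩
    · exact absurd h (by simp)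
    rcases t with _|⟨e5, t⟩
    · obtain ⟨rfl, rfl, rfl, rfl, rfl, rfl⟩ : b = 1 ∧ e1 = 2 ∧ e2 = 4 ∧ e3 = 1 ∧ e4 = 3 ∧ a = 1 := by simpa using h
      exact ⟨[1,2,2], by decide, ([2,1,2,2,4,1,3] : List ℕ), dih_of_eq (by simp), by decide⟩
    · exact absurd h (by simp)
  · -- p = [1,3,1,3]
    rcases t with _|⟨e1, t⟩
    · exact absurd h (by simp)
    rcases t with _|⟨e2, t⟩
    · exact absurd h (by simp)
    rcases t with _|⟨e3, t⟩
    · obtain ⟨rfl, rfl, rfl, rfl⟩ : b = 1 ∧ e1 = 3 ∧ e2 = 1 ∧ a = 3 := by simpa using h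
      exact ⟨[1,2,3,1], by decide, ([4,1,2,3,1] : List ℕ), dih_of_eq (by simp), by decide⟩
    · exact absurd h (by simp)
  · -- p = [1,3,1,4,1]
    rcases t with _|⟨e1, t⟩
    · exact absurd h (by simp)
    rcases t with _|⟨e2, t⟩
    · exact absurd h (by simp)
    rcases t with _|⟨e3, t⟩
    · exact absurd h (by simp)
    rcases t with _|⟨e4, t⟩
    · obtain ⟨rfl, rfl, rfl, rfl, rfl⟩ : b = 1 ∧ e1 = 3 ∧ e2 = 1 ∧ e3 = 4 ∧ a = 1 := by simpa using h
      exact ⟨[1,2,3,1], by decide, ([2,1,2,3,1,4] : List ℕ), dih_of_eq (by simp), by decide⟩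
    · exact absurd h (by simp)
  · -- p = [1,3,1,5,1,2]
    rcases t with _|⟨e1, t⟩
    · exact absurd h (by simp)
    rcases t with _|⟨e2, t⟩
    · exact absurd h (by simp)
    rcases t with _|⟨e3, t⟩
    · exact absurd h (by simp)
    rcases t with _|⟨e4, t⟩
    · exact absurd h (by simp)
    rcases t with _|⟨e5, t⟩
    · obtain ⟨rfl, rfl, rfl, rfl, rfl, rfl⟩ : b = 1 ∧ e1 = 3 ∧ e2 = 1 ∧ e3 = 5 ∧ e4 = 1 ∧ a = 2 := by simpa using h
      exact ⟨[1,2,3,1], by decide, ([3,1,2,3,1,5,1] : List ℕ), dih_of_eq (by simp), by decide⟩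
    · exact absurd h (by simp)
  · -- p = [1,3,1,5,1,3,1]
    rcases t with _|⟨e1, t⟩
    · exact absurd h (by simp)
    rcases t with _|⟨e2, t⟩
    · exact absurd h (by simp)
    rcases t with _|⟨e3, t⟩
    · exact absurd h (by simp)
    rcases t with _|⟨e4, t⟩
    · exact absurd h (by simp)
    rcases t with _|⟨e5, t⟩
    · exact absurd h (by simp)
    rcases t with _|⟨e6, t⟩
    · obtain ⟨rfl, rfl, rfl, rfl, rfl, rfl, rfl⟩ : b = 1 ∧ e1 = 3 ∧ e2 = 1 ∧ e3 = 5 ∧ e4 = 1 ∧ e5 = 3 ∧ a = 1 := by simpa using h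
      exact ⟨[1,2,3,1], by decide, ([2,1,2,3,1,5,1,3] : List ℕ), dih_of_eq (by simp), by decide⟩
    · exact absurd h (by simp)
  · -- p = [1,4,1,2]
    rcases t with _|⟨e1, t⟩
    · exact absurd h (by simp)
    rcases t with _|⟨e2, t⟩
    · exact absurd h (by simp)
    rcases t with _|⟨e3, t⟩
    · obtain ⟨rfl, rfl, rfl, rfl⟩ : b = 1 ∧ e1 = 4 ∧ e2 = 1 ∧ a = 2 := by simpa using h
      exact ⟨[2,1,3], by decide, ([3,1,2,4,1] : List ℕ).reverse, dih_trans (dih_of_eq (by simp)) (dih_reverse _), by decide⟩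
    · exact absurd h (by simp)
  · -- p = [2,1,3]
    rcases t with _|⟨e1, t⟩
    · exact absurd h (by simp)
    rcases t with _|⟨e2, t⟩
    · obtain ⟨rfl, rfl, rfl⟩ : b = 2 ∧ e1 = 1 ∧ a = 3 := by simpa using h
      exact absurd (dih_perm (quid_len3 hq (by decide))) (by decide)
    · exact absurd h (by simp)
  · -- p = [2,1,5,1,2]
    rcases t with _|⟨e1, t⟩
    · exact absurd h (by simp)
    rcases t with _|⟨e2, t⟩
    · exact absurd h (by simp)
    rcases t with _|⟨e3, t⟩
    · exact absurd h (by simp)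
    rcases t with _|⟨e4, t⟩
    · obtain ⟨rfl, rfl, rfl, rfl, rfl⟩ : b = 2 ∧ e1 = 1 ∧ e2 = 5 ∧ e3 = 1 ∧ a = 2 := by simpa using h
      exact ⟨[1,3,1,3], by decide, ([3,1,3,1,5,1] : List ℕ).reverse, dih_trans (dih_of_eq (by simp)) (dih_reverse _), by decide⟩
    · exact absurd h (by simp)

end Cases

section Main
open List

lemma not_nil_pats : ([] : List ℕ) ∉ pats12 := by decide
lemma not_single_pats (n : ℕ) : [n] ∉ pats12 := by simp [pats12]

lemma grow_case (a b : ℕ) (t : List ℕ) (p : List ℕ) (k : ℕ)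
    (hq : IsQuiddity (a :: b :: t)) (hp : p ∈ pats12)
    (h : p <:+: (a :: b :: t).rotate k) :
    ∃ f ∈ pats12, CycContains ((a+1) :: 1 :: (b+1) :: t) f := by
  have hlen : p.length ≤ (a :: b :: t).length := by
    have := h.length_le
    rwa [List.length_rotate] at this
  rcases cyclic_infix_cases k hlen h with ⟨u, v, huv⟩ | ⟨p₁, p₂, m, h1ne, h2ne, hp12, hl⟩
  · rcases u with _ | ⟨u0, u⟩
    · rcases p with _ | ⟨a0, p⟩
      · exact absurd hp not_nil_pats
      · rcases p with _ | ⟨b0, y⟩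
        · exact absurd hp (not_single_pats a0)
        · obtain ⟨h1, h2, h3⟩ : a0 = a ∧ b0 = b ∧ y ++ v = t := by simpa using huv
          rw [← h3]
          rw [h1, h2] at hp
          have := case_iv a b [] y v (by simpa using hp)
          simpa using this
    · rcases u with _ | ⟨u1, u⟩
      · rcases p with _ | ⟨b0, y⟩
        · exact absurd hp not_nil_pats
        · obtain ⟨h1, h2, h3⟩ : u0 = a ∧ b0 = b ∧ y ++ v = t := by simpa using huv
          rw [← h3]
          rw [h2] at hp
          exact case_ii a b y v hp
      · obtain ⟨h1, h2, h3⟩ : u0 = a ∧ u1 = b ∧ u ++ (p ++ v) = t := by simpa using huv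
        rw [← h3]
        exact ⟨p, hp, (a+1) :: 1 :: (b+1) :: (u ++ (p ++ v)), dih_refl _,
          (a+1) :: 1 :: (b+1) :: u, v, by simp⟩
  · rcases p₂ with _ | ⟨a0, p₂⟩
    · exact absurd rfl h2ne
    · rcases p₂ with _ | ⟨b0, y⟩
      · rcases m with _ | ⟨b0, m⟩
        · obtain ⟨h1, h2⟩ : a = a0 ∧ b :: t = p₁ := by simpa using hl
          rw [hp12, ← h2, ← h1] at hp
          exact case_v a b t hq (by simpa using hp)
        · obtain ⟨h1, h2, h3⟩ : a = a0 ∧ b = b0 ∧ t = m ++ p₁ := by simpa using hl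
          rw [h3]
          rw [hp12, ← h1] at hp
          exact case_iii a b m p₁ hp
      · obtain ⟨h1, h2, h3⟩ : a = a0 ∧ b = b0 ∧ t = y ++ (m ++ p₁) := by simpa using hl
        rw [h3]
        rw [hp12, ← h1, ← h2] at hp
        have := case_iv a b p₁ y m hp
        simpa [List.append_assoc] using this

end Main

/-- Every quiddity cycle is `(0,0)`, `(1,1,1)`, `(1,2,1,2)`, or contains one of
the listed 12 sequences. -/
theorem quiddity_contains_twelve (c : List ℕ) (hc : IsQuiddity c) :
    DihEquiv c [0, 0] ∨ DihEquiv c [1, 1, 1] ∨ DihEquiv c [1, 2, 1, 2] ∨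
    ∃ f ∈ ([[1,2,2], [1,2,3,1], [1,2,3,2,1], [1,2,4,1,2], [1,2,4,1,3,1],
            [1,3,1,3], [1,3,1,4,1], [1,3,1,5,1,2], [1,3,1,5,1,3,1],
            [1,4,1,2], [2,1,3], [2,1,5,1,2]] : List (List ℕ)),
      CycContains c f := by
  induction hc with
  | base => exact Or.inl (dih_refl _)
  | dih hq hs ih =>
      have hd := dih_symm (dih_of_step hs)
      rcases ih with h | h | h | ⟨f, hf, hcyc⟩
      · exact Or.inl (dih_trans hd h)
      · exact Or.inr (Or.inl (dih_trans hd h))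
      · exact Or.inr (Or.inr (Or.inl (dih_trans hd h)))
      · exact Or.inr (Or.inr (Or.inr ⟨f, hf, cyc_trans hd hcyc⟩))
  | @grow a b t hq ih =>
      rcases ih with h | h | h | ⟨f, hf, hcyc⟩
      · -- old cycle ~ [0,0]
        have hlen := dih_length h
        simp only [List.length_cons, List.length_nil] at hlen
        have ht : t = [] := List.length_eq_zero_iff.1 (by omega)
        subst ht
        have hperm := dih_perm h
        have ha : a = 0 := by
          have := hperm.mem_iff.1 (show a ∈ [a, b] by simp); simpa using this
        have hb : b = 0 := by
          have := hperm.mem_iff.1 (show b ∈ [a, b] by simp); simpa using this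
        subst ha; subst hb
        exact Or.inr (Or.inl (dih_refl _))
      · -- old cycle ~ [1,1,1]
        have hlen := dih_length h
        simp only [List.length_cons, List.length_nil] at hlen
        rcases t with _ | ⟨x, t⟩
        · simp at hlen
        · rcases t with _ | ⟨x2, t⟩
          · have hperm := dih_perm h
            have ha : a = 1 := by
              have := hperm.mem_iff.1 (show a ∈ [a, b, x] by simp); simpa using this
            have hb : b = 1 := by
              have := hperm.mem_iff.1 (show b ∈ [a, b, x] by simp); simpa using this
            have hx : x = 1 := by
              have := hperm.mem_iff.1 (show x ∈ [a, b, x] by simp); simpa using this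
            subst ha; subst hb; subst hx
            have e : ([2,1,2,1] : List ℕ).rotate 1 = [1,2,1,2] := by decide
            exact Or.inr (Or.inr (Or.inl (e ▸ dih_rotate ([2,1,2,1] : List ℕ) 1)))
          · simp only [List.length_cons, List.length_nil] at hlen; omega
      · -- old cycle ~ [1,2,1,2]
        have hcases : a :: b :: t = [1,2,1,2] ∨ a :: b :: t = [2,1,2,1] := by
          obtain ⟨k, hk | hk⟩ := dih_canon h
          · obtain ⟨m, hm⟩ := rotate_rotate_self (a :: b :: t) k
            rw [← hk] at hm
            rcases rot_1212 m with he | he <;> rw [he] at hm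
            · exact Or.inl hm.symm
            · exact Or.inr hm.symm
          · obtain ⟨m, hm⟩ := rotate_rotate_self (a :: b :: t).reverse k
            rw [← hk] at hm
            rcases rot_1212 m with he | he <;> rw [he] at hm
            · refine Or.inr ?_
              rw [← List.reverse_reverse (a :: b :: t), ← hm]; rfl
            · refine Or.inl ?_
              rw [← List.reverse_reverse (a :: b :: t), ← hm]; rfl
        rcases hcases with hc | hc
        · obtain ⟨rfl, rfl, rfl⟩ : a = 1 ∧ b = 2 ∧ t = [1,2] := by simpa using hc
          exact Or.inr (Or.inr (Or.inr ⟨[2,1,3], by decide,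
            (1+1) :: 1 :: (2+1) :: [1,2], dih_refl _, by decide⟩))
        · obtain ⟨rfl, rfl, rfl⟩ : a = 2 ∧ b = 1 ∧ t = [2,1] := by simpa using hc
          exact Or.inr (Or.inr (Or.inr ⟨[1,2,2], by decide,
            (2+1) :: 1 :: (1+1) :: [2,1], dih_refl _, by decide⟩))
      · -- old cycle contains a pattern f
        obtain ⟨c', hdih, hinf⟩ := hcyc
        obtain ⟨k, hk | hk⟩ := dih_canon hdih
        · subst hk
          exact Or.inr (Or.inr (Or.inr (grow_case a b t f k hq hf hinf)))
        · have e1 : (a :: b :: t).reverse = t.reverse ++ [b, a] := by simp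
          have hrot1 : DihEquiv (t.reverse ++ [b, a]) (b :: a :: t.reverse) := by
            have := dih_rotate (t.reverse ++ [b, a]) t.reverse.length
            rwa [List.rotate_append_length_eq] at this
          have hc2 : DihEquiv (a :: b :: t) (b :: a :: t.reverse) :=
            dih_trans (dih_reverse _) (by rw [e1]; exact hrot1)
          have hq2 : IsQuiddity (b :: a :: t.reverse) := quid_dih hq hc2
          have e2 : (a :: b :: t).reverse.rotate t.reverse.length = b :: a :: t.reverse := by
            rw [e1, List.rotate_append_length_eq]; rfl
          obtain ⟨m, hm⟩ := rotate_rotate_self ((a :: b :: t).reverse) t.reverse.length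
          rw [List.rotate_rotate] at hm
          have e3 : (b :: a :: t.reverse).rotate (m + k) = c' := by
            rw [← e2, List.rotate_rotate, ← Nat.add_assoc, ← List.rotate_rotate, hm, hk]
          have hinf' : f <:+: (b :: a :: t.reverse).rotate (m + k) := by rw [e3]; exact hinf
          obtain ⟨f', hf', hc'⟩ := grow_case b a t.reverse f (m + k) hq2 hf hinf'
          have hNN : DihEquiv ((a+1) :: 1 :: (b+1) :: t) ((b+1) :: 1 :: (a+1) :: t.reverse) := by
            have e4 : ((a+1) :: 1 :: (b+1) :: t).reverse = t.reverse ++ [b+1, 1, a+1] := by simp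
            have hrot2 : DihEquiv (t.reverse ++ [b+1, 1, a+1]) ((b+1) :: 1 :: (a+1) :: t.reverse) := by
              have := dih_rotate (t.reverse ++ [b+1, 1, a+1]) t.reverse.length
              rwa [List.rotate_append_length_eq] at this
            exact dih_trans (dih_reverse _) (by rw [e4]; exact hrot2)
          exact Or.inr (Or.inr (Or.inr ⟨f', hf', cyc_trans hNN hc'⟩))
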